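/- Let X ⊆ ℝ^{n_x} be an open convex set, let f : ℝ^{n_x} → ℝ^{n_x} and g : ℝ^{n_x} → ℝ^{n_x×n_u}, and let Φ : ℝ^{n_x} → ℝ^{n_f} be continuously differentiable. Suppose A ∈ ℝ^{n_f×n_f} satisfies Φ(f(x)) = A Φ(x) for all x ∈ X, and suppose that for a given x ∈ X and u ∈ ℝ^{n_u} the whole segment {f(x) + λ g(x)u : λ ∈ [0,1]} lies in X. Then Φ(f(x) + g(x)u) = A Φ(x) + B(x,u) u, where B(x,u) = (∫₀¹ DΦ(f(x) + λ g(x)u) dλ) · g(x) and DΦ denotes the Jacobian matrix of Φ. -/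

import Mathlib

open Matrix MeasureTheory

/-- Exact finite-dimensional Koopman lifting of the control-affine system
`x⁺ = f x + g x · u`: if `Φ` is `C¹`, `Φ ∘ f = A Φ` on an open convex set `X`,
and the segment `{f x + λ (g x) u : λ ∈ [0,1]}` lies in `X`, then
`Φ (f x + g x u) = A Φ(x) + B(x,u) u` with
`B(x,u) = (∫₀¹ DΦ(f x + λ g x u) dλ) · g x`. -/
theorem koopman_lifting_with_input {nx nu nf : ℕ}
    (X : Set (Fin nx → ℝ)) (hXopen : IsOpen X) (hXconv : Convex ℝ X)
    (f : (Fin nx → ℝ) → (Fin nx → ℝ))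
    (g : (Fin nx → ℝ) → Matrix (Fin nx) (Fin nu) ℝ)
    (Φ : (Fin nx → ℝ) → (Fin nf → ℝ))
    (hΦ : ContDiff ℝ 1 Φ)
    (A : Matrix (Fin nf) (Fin nf) ℝ)
    (hA : ∀ x ∈ X, Φ (f x) = A.mulVec (Φ x))
    (x : Fin nx → ℝ) (u : Fin nu → ℝ) (hx : x ∈ X)
    (hseg : ∀ lam ∈ Set.Icc (0 : ℝ) 1, f x + lam • (g x).mulVec u ∈ X) :
    Φ (f x + (g x).mulVec u)
      = A.mulVec (Φ x)
        + (∫ lam in (0:ℝ)..1, fderiv ℝ Φ (f x + lam • (g x).mulVec u))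
            ((g x).mulVec u) := by
  set v := (g x).mulVec u with hv
  have hcont : Continuous fun lam : ℝ => fderiv ℝ Φ (f x + lam • v) :=
    (hΦ.continuous_fderiv one_ne_zero).comp (by continuity)
  have hderiv : ∀ lam ∈ Set.uIcc (0:ℝ) 1,
      HasDerivAt (fun t : ℝ => Φ (f x + t • v))
        ((fderiv ℝ Φ (f x + lam • v)) v) lam := by
    intro lam _
    have h1 : HasDerivAt (fun t : ℝ => f x + t • v) v lam := by
      simpa using ((hasDerivAt_id lam).smul_const v).const_add (f x)
    have h2 : HasFDerivAt Φ (fderiv ℝ Φ (f x + lam • v)) (f x + lam • v) :=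
      (hΦ.differentiable one_ne_zero (f x + lam • v)).hasFDerivAt
    exact h2.comp_hasDerivAt lam h1
  have hint : IntervalIntegrable (fun lam : ℝ => (fderiv ℝ Φ (f x + lam • v)) v)
      volume 0 1 := by
    exact (hcont.clm_apply continuous_const).intervalIntegrable 0 1
  have hftc := intervalIntegral.integral_eq_sub_of_hasDerivAt hderiv hint
  have hop : IntervalIntegrable (fun lam : ℝ => fderiv ℝ Φ (f x + lam • v))
      volume 0 1 := hcont.intervalIntegrable 0 1
  have hswap : (∫ lam in (0:ℝ)..1, fderiv ℝ Φ (f x + lam • v)) v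
      = ∫ lam in (0:ℝ)..1, (fderiv ℝ Φ (f x + lam • v)) v := by
    exact ContinuousLinearMap.intervalIntegral_apply hop v
  have h0 : Φ (f x) = A.mulVec (Φ x) := hA x hx
  rw [hswap, hftc]
  simp [h0]
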